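/- Let a, b, c : ℝ → ℝ be positive functions satisfying the SU(2) Ricci flow ODE a' = ((b - c)² - a²)/(2bc), b' = ((c - a)² - b²)/(2ca), c' = ((a - b)² - c²)/(2ab). Then the following identities hold: a''/a + b''/b + c''/c = 0; a(a'bc)'/(bc) + ((b² - c²)² - a⁴)/(2b²c²) = 0; b(b'ca)'/(ca) + ((a² - c²)² - b⁴)/(2a²c²) = 0; and -c(c'ab)'/(ab) - ((a² - b²)² - c⁴)/(2a²b²) = 0. -/

import Mathlib

/-- Auxiliary: explicit formulas for the second derivative of `a` and for the
derivative of `a' * b * c` when `a' = ((b-c)^2 - a^2)/(2bc)`. -/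
lemma su2_aux (a b c : ℝ → ℝ)
    (hbpos : ∀ t, 0 < b t) (hcpos : ∀ t, 0 < c t)
    (ha : Differentiable ℝ a) (hb : Differentiable ℝ b) (hc : Differentiable ℝ c)
    (hda : ∀ t, deriv a t = ((b t - c t) ^ 2 - (a t) ^ 2) / (2 * b t * c t)) (t : ℝ) :
    deriv (deriv a) t =
      ((2 * (b t - c t) * (deriv b t - deriv c t) - 2 * a t * deriv a t) * (2 * b t * c t)
        - ((b t - c t) ^ 2 - (a t) ^ 2) * (2 * deriv b t * c t + 2 * b t * deriv c t))
        / (2 * b t * c t) ^ 2 ∧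
    deriv (fun s => deriv a s * b s * c s) t =
      (2 * (b t - c t) * (deriv b t - deriv c t) - 2 * a t * deriv a t) / 2 := by
  have hfa : deriv a = fun s => ((b s - c s) ^ 2 - (a s) ^ 2) / (2 * b s * c s) :=
    funext hda
  have hn : HasDerivAt (fun s => (b s - c s) ^ 2 - (a s) ^ 2)
      (2 * (b t - c t) * (deriv b t - deriv c t) - 2 * a t * deriv a t) t := by
    convert (((hb t).hasDerivAt.fun_sub (hc t).hasDerivAt).fun_pow 2).fun_sub
      (((ha t).hasDerivAt).fun_pow 2) using 1
    all_goals try rfl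
    push_cast
    try ring
  have hd : HasDerivAt (fun s => 2 * b s * c s)
      (2 * deriv b t * c t + 2 * b t * deriv c t) t := by
    convert (((hb t).hasDerivAt).const_mul (2 : ℝ)).fun_mul ((hc t).hasDerivAt) using 1
    try ring
  have hbt := hbpos t
  have hct := hcpos t
  have hden : 2 * b t * c t ≠ 0 := by positivity
  have hq : HasDerivAt (deriv a)
      (((2 * (b t - c t) * (deriv b t - deriv c t) - 2 * a t * deriv a t) * (2 * b t * c t)
        - ((b t - c t) ^ 2 - (a t) ^ 2) * (2 * deriv b t * c t + 2 * b t * deriv c t))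
        / (2 * b t * c t) ^ 2) t := by
    have h := hn.fun_div hd hden
    rwa [← hfa] at h
  have hfab : (fun s => deriv a s * b s * c s)
      = fun s => ((b s - c s) ^ 2 - (a s) ^ 2) / 2 := by
    funext s
    rw [hda s]
    have hb0 : b s ≠ 0 := (hbpos s).ne'
    have hc0 : c s ≠ 0 := (hcpos s).ne'
    field_simp
  have hp : HasDerivAt (fun s => deriv a s * b s * c s)
      ((2 * (b t - c t) * (deriv b t - deriv c t) - 2 * a t * deriv a t) / 2) t := by
    rw [hfab]
    exact hn.div_const 2
  exact ⟨hq.deriv, hp.deriv⟩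

set_option maxHeartbeats 3200000 in
/-- Ricci-flatness identities for the signature-(2,2) metric over SL(2,ℝ) when
(a,b,c) solves the SU(2) Ricci flow. -/
theorem su2_flow_sl2_ricci_flat (a b c : ℝ → ℝ)
    (hapos : ∀ t, 0 < a t) (hbpos : ∀ t, 0 < b t) (hcpos : ∀ t, 0 < c t)
    (ha : Differentiable ℝ a) (hb : Differentiable ℝ b) (hc : Differentiable ℝ c)
    (hda : ∀ t, deriv a t = ((b t - c t) ^ 2 - (a t) ^ 2) / (2 * b t * c t))
    (hdb : ∀ t, deriv b t = ((c t - a t) ^ 2 - (b t) ^ 2) / (2 * c t * a t))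
    (hdc : ∀ t, deriv c t = ((a t - b t) ^ 2 - (c t) ^ 2) / (2 * a t * b t)) :
    ∀ t, deriv (deriv a) t / a t + deriv (deriv b) t / b t + deriv (deriv c) t / c t = 0 ∧
      a t * deriv (fun s => deriv a s * b s * c s) t / (b t * c t) +
        (((b t) ^ 2 - (c t) ^ 2) ^ 2 - (a t) ^ 4) / (2 * (b t) ^ 2 * (c t) ^ 2) = 0 ∧
      b t * deriv (fun s => deriv b s * c s * a s) t / (c t * a t) +
        (((a t) ^ 2 - (c t) ^ 2) ^ 2 - (b t) ^ 4) / (2 * (a t) ^ 2 * (c t) ^ 2) = 0 ∧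
      -(c t * deriv (fun s => deriv c s * a s * b s) t / (a t * b t)) -
        (((a t) ^ 2 - (b t) ^ 2) ^ 2 - (c t) ^ 4) / (2 * (a t) ^ 2 * (b t) ^ 2) = 0 := by
  intro t
  obtain ⟨ea, ea2⟩ := su2_aux a b c hbpos hcpos ha hb hc hda t
  obtain ⟨eb, eb2⟩ := su2_aux b c a hcpos hapos hb hc ha hdb t
  obtain ⟨ec, ec2⟩ := su2_aux c a b hapos hbpos hc ha hb hdc t
  have ha0 : a t ≠ 0 := (hapos t).ne'
  have hb0 : b t ≠ 0 := (hbpos t).ne'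
  have hc0 : c t ≠ 0 := (hcpos t).ne'
  refine ⟨?_, ?_, ?_, ?_⟩
  · rw [ea, eb, ec, hda t, hdb t, hdc t]
    field_simp
    ring
  · rw [ea2, hda t, hdb t, hdc t]
    field_simp
    ring
  · rw [eb2, hda t, hdb t, hdc t]
    field_simp
    ring
  · rw [ec2, hda t, hdb t, hdc t]
    field_simp
    ring
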